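/- arXiv:quant-ph/0212151 — 2 statements merged into one kernel-verified Lean document; each statement's English description precedes it below -/
import Mathlib

section
/- Let q, a ∈ S_n with τ(q) in the relative interior of Δ_{n-1}, and suppose τ(a) ∈ C_k^q. Then for every index r ≠ k, the entire modulus great circle segment ⟨e_r ↻ a⟩ is contained in τ^{-1}(C_k^q); that is, every apparatus state on such a segment yields the same outcome k. -/
open MeasureTheory

noncomputable section

instance (n : ℕ) : MeasurableSpace (EuclideanSpace ℂ (Fin n)) := borel _
instance (n : ℕ) : BorelSpace (EuclideanSpace ℂ (Fin n)) := ⟨rfl⟩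

/-- The unit sphere `S_n = {z ∈ ℂ^n : ∑ |z_i|² = 1}` of `ℂ^n ≅ ℝ^{2n}`
(with the Euclidean metric). -/
def Sph (n : ℕ) : Set (EuclideanSpace ℂ (Fin n)) := Metric.sphere 0 1

/-- The standard `(n-1)`-simplex `Δ_{n-1}` in `ℝ^n` (with the Euclidean metric). -/
def Splx (n : ℕ) : Set (EuclideanSpace ℝ (Fin n)) :=
  {x | (∀ i, 0 ≤ x i) ∧ ∑ i, x i = 1}

/-- `τ(z) = (|z_1|², …, |z_n|²)`. -/
def tau (n : ℕ) (z : EuclideanSpace ℂ (Fin n)) : EuclideanSpace ℝ (Fin n) :=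
  (WithLp.equiv 2 (Fin n → ℝ)).symm fun i => ‖z i‖ ^ 2

/-- `C_k^q`: the relative interior of the convex hull of
`{e_1, …, e_{k-1}, τ(q), e_{k+1}, …, e_n}`. -/
def Ck (n : ℕ) (q : EuclideanSpace ℂ (Fin n)) (k : Fin n) :
    Set (EuclideanSpace ℝ (Fin n)) :=
  intrinsicInterior ℝ (convexHull ℝ
    (insert (tau n q) ((fun j => EuclideanSpace.single j (1 : ℝ)) '' {j | j ≠ k})))

/-- The modulus great circle segment `⟨e_r ↻ a⟩`. -/
def mgcs (n : ℕ) (r : Fin n) (a : EuclideanSpace ℂ (Fin n)) :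
    Set (EuclideanSpace ℂ (Fin n)) :=
  {c ∈ Sph n | ∃ s : ℝ, 0 < s ∧ s < 1 ∧
    (∀ j, j ≠ r → ‖c j‖ = Real.sqrt s * ‖a j‖) ∧
    ‖c r‖ = Real.sqrt ((1 - s) + s * ‖a r‖ ^ 2)}

theorem myIntrinsic' {V : Type*} [NormedAddCommGroup V] [NormedSpace ℝ V]
    {s : Set V} (h : affineSpan ℝ s = ⊤) :
    intrinsicInterior ℝ s = interior s := by
  refine subset_antisymm ?_ interior_subset_intrinsicInterior
  rintro x ⟨y, hy, rfl⟩
  have hopen : IsOpen ((affineSpan ℝ s : Set V)) := by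
    rw [h]; exact isOpen_univ
  have hmap := hopen.isOpenMap_subtype_val
  have h2 : Subtype.val '' interior ((Subtype.val) ⁻¹' s : Set (affineSpan ℝ s)) ⊆ interior s :=
    (hmap.image_interior_subset _).trans (interior_mono (Set.image_preimage_subset _ _))
  exact h2 ⟨y, hy, rfl⟩


theorem key' {n : ℕ} (hn : 1 ≤ n) (pts : Fin n → EuclideanSpace ℝ (Fin n))
    (hsum : ∀ i, ∑ j, pts i j = 1) (hind : AffineIndependent ℝ pts)
    (x : EuclideanSpace ℝ (Fin n)) :
    x ∈ intrinsicInterior ℝ (convexHull ℝ (Set.range pts)) ↔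
      ∃ w : Fin n → ℝ, (∀ i, 0 < w i) ∧ ∑ i, w i = 1 ∧ x = ∑ i, w i • pts i := by
  classical
  let f : EuclideanSpace ℝ (Fin n) →ₗ[ℝ] ℝ :=
    { toFun := fun x => ∑ j, x j
      map_add' := fun x y => by
        simp [Finset.sum_add_distrib]
      map_smul' := fun c x => by
        simp [Finset.mul_sum] }
  have hfapp : ∀ x : EuclideanSpace ℝ (Fin n), f x = ∑ j, x j := fun _ => rfl
  have hfs : Function.Surjective f := by
    intro c
    refine ⟨EuclideanSpace.single ⟨0, by omega⟩ c, ?_⟩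
    rw [hfapp]
    simp [EuclideanSpace.single_apply]
  set V := LinearMap.ker f with hVdef
  have hV : Module.finrank ℝ V = n - 1 := by
    have h1 := f.finrank_range_add_finrank_ker
    rw [LinearMap.range_eq_top.2 hfs] at h1
    rw [finrank_top, Module.finrank_self, finrank_euclideanSpace_fin] at h1
    rw [← hVdef] at h1
    omega
  set F := EuclideanSpace ℝ (Fin (Module.finrank ℝ V)) with hF
  let L : F ≃ₗᵢ[ℝ] V := (stdOrthonormalBasis ℝ V).repr.symm
  let p : EuclideanSpace ℝ (Fin n) := pts ⟨0, by omega⟩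
  let φ : F →ᵃⁱ[ℝ] EuclideanSpace ℝ (Fin n) :=
    (AffineIsometryEquiv.constVAdd ℝ (EuclideanSpace ℝ (Fin n)) p).toAffineIsometry.comp
      (V.subtypeₗᵢ.comp L.toLinearIsometry).toAffineIsometry
  have hφ : ∀ y, φ y = p + (L y : EuclideanSpace ℝ (Fin n)) := fun y => rfl
  have hker : ∀ i, pts i - p ∈ V := by
    intro i
    rw [hVdef, LinearMap.mem_ker, hfapp]
    have : ∀ j, (pts i - p) j = pts i j - p j := fun j => rfl
    simp only [this, Finset.sum_sub_distrib]
    rw [hsum, hsum]; ring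
  let pts' : Fin n → F := fun i => L.symm ⟨pts i - p, hker i⟩
  have hφpts : ∀ i, φ (pts' i) = pts i := by
    intro i
    rw [hφ]
    simp only [pts', LinearIsometryEquiv.apply_symm_apply]
    abel
  have hcomp : (φ ∘ pts') = pts := funext hφpts
  have h1 : φ '' (convexHull ℝ (Set.range pts')) = convexHull ℝ (Set.range pts) := by
    have := AffineMap.image_convexHull φ.toAffineMap (Set.range pts')
    have hco : ⇑φ.toAffineMap = ⇑φ := rfl
    rw [hco] at this
    rw [this, ← Set.range_comp, hcomp]
  have hind' : AffineIndependent ℝ pts' := by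
    apply AffineIndependent.of_comp φ.toAffineMap
    have hco : ⇑φ.toAffineMap = ⇑φ := rfl
    rw [hco, hcomp]; exact hind
  have htot : affineSpan ℝ (Set.range pts') = ⊤ := by
    rw [hind'.affineSpan_eq_top_iff_card_eq_finrank_add_one]
    simp only [Fintype.card_fin]
    rw [show Module.finrank ℝ F = Module.finrank ℝ ↥V from finrank_euclideanSpace_fin, hV]
    omega
  let b : AffineBasis (Fin n) ℝ F := ⟨pts', hind', htot⟩
  have hbcoe : ⇑b = pts' := rfl
  have hspanhull : affineSpan ℝ (convexHull ℝ (Set.range pts')) = ⊤ := by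
    rw [affineSpan_convexHull, htot]
  have hmap : ∀ (w : Fin n → ℝ), ∑ i, w i = 1 →
      ∀ y, y = Finset.univ.affineCombination ℝ pts' w →
      φ y = ∑ i, w i • pts i := by
    intro w hw y hy
    have h2 := Finset.map_affineCombination Finset.univ pts' w hw φ.toAffineMap
    have h3 : ⇑φ.toAffineMap = ⇑φ := rfl
    rw [h3] at h2
    rw [hy, h2, show ⇑φ ∘ pts' = pts from hcomp,
      Finset.univ.affineCombination_eq_linear_combination _ _ hw]
  rw [← h1, AffineIsometry.image_intrinsicInterior, myIntrinsic' hspanhull]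
  have hbint : interior (convexHull ℝ (Set.range pts')) = {y | ∀ i, 0 < b.coord i y} := by
    rw [← hbcoe, b.interior_convexHull]
  constructor
  · rintro ⟨y, hy, rfl⟩
    rw [hbint] at hy
    refine ⟨fun i => b.coord i y, hy, b.sum_coord_apply_eq_one y, ?_⟩
    exact hmap _ (b.sum_coord_apply_eq_one y) y (b.affineCombination_coord_eq_self y).symm
  · rintro ⟨w, hwpos, hwsum, rfl⟩
    refine ⟨Finset.univ.affineCombination ℝ pts' w, ?_, ?_⟩
    · rw [hbint]
      intro i
      rw [← hbcoe, b.coord_apply_combination_of_mem (Finset.mem_univ i) hwsum]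
      exact hwpos i
    · exact hmap w hwsum _ rfl

theorem sum_smul_single_apply {n : ℕ} (u : Fin n → ℝ) (j : Fin n) :
    (∑ i, u i • EuclideanSpace.single i (1:ℝ)) j = u j := by
  rw [WithLp.ofLp_sum, Finset.sum_apply]
  have : ∀ i : Fin n, (u i • EuclideanSpace.single i (1:ℝ)) j
      = if j = i then u i else 0 := by
    intro i
    have h1 : (u i • EuclideanSpace.single i (1:ℝ)) j
        = u i * (EuclideanSpace.single i (1:ℝ)) j := rfl
    rw [h1, EuclideanSpace.single_apply]
    split_ifs <;> ring
  simp only [this, Finset.sum_ite_eq, Finset.mem_univ, if_true]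

theorem single_mem_splx {n : ℕ} (i : Fin n) :
    (∀ j, 0 ≤ (EuclideanSpace.single i (1:ℝ)) j) ∧
      ∑ j, (EuclideanSpace.single i (1:ℝ)) j = 1 := by
  constructor
  · intro j; rw [EuclideanSpace.single_apply]; split_ifs <;> norm_num
  · simp only [EuclideanSpace.single_apply]
    rw [Finset.sum_ite_eq', if_pos (Finset.mem_univ i)]

theorem singles_affineIndependent {n : ℕ} :
    AffineIndependent ℝ (fun i : Fin n => EuclideanSpace.single i (1:ℝ)) := by
  rw [affineIndependent_iff]
  intro t w hw0 hsum0 e he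
  have h := congrArg (fun x : EuclideanSpace ℝ (Fin n) => x e) hsum0
  simp only at h
  rw [WithLp.ofLp_sum, Finset.sum_apply] at h
  have hz : ∀ i ∈ t, (w i • EuclideanSpace.single i (1:ℝ)) e
      = if e = i then w i else 0 := by
    intro i _
    have h1 : (w i • EuclideanSpace.single i (1:ℝ)) e
        = w i * (EuclideanSpace.single i (1:ℝ)) e := rfl
    rw [h1, EuclideanSpace.single_apply]
    split_ifs <;> ring
  rw [Finset.sum_congr rfl hz, Finset.sum_ite_eq, if_pos he] at h
  exact h

theorem splx_eq (n : ℕ) :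
    {x : EuclideanSpace ℝ (Fin n) | (∀ i, 0 ≤ x i) ∧ ∑ i, x i = 1}
      = convexHull ℝ (Set.range fun i : Fin n => EuclideanSpace.single i (1:ℝ)) := by
  apply subset_antisymm
  · rintro x ⟨hx0, hx1⟩
    have hxe : x = ∑ i, x i • EuclideanSpace.single i (1:ℝ) := by
      ext j
      rw [sum_smul_single_apply]
    have hm := affineCombination_mem_convexHull
      (s := Finset.univ) (v := fun i : Fin n => EuclideanSpace.single i (1:ℝ))
      (w := fun i => x i) (fun i _ => hx0 i) hx1
    rwa [Finset.univ.affineCombination_eq_linear_combination _ _ hx1, ← hxe] at hm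
  · apply convexHull_min
    · rintro _ ⟨i, rfl⟩
      exact single_mem_splx i
    · rintro x ⟨hx0, hx1⟩ y ⟨hy0, hy1⟩ a b ha hb hab
      constructor
      · intro i
        have : (a • x + b • y) i = a * x i + b * y i := rfl
        rw [this]
        exact add_nonneg (mul_nonneg ha (hx0 i)) (mul_nonneg hb (hy0 i))
      · have : ∀ j, (a • x + b • y) j = a * x j + b * y j := fun _ => rfl
        simp only [this, Finset.sum_add_distrib, ← Finset.mul_sum, hx1, hy1]
        linarith

/-- If `τ(q)` is in the relative interior of `Δ_{n-1}` and `τ(a) ∈ C_k^q`, then for every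
`r ≠ k`, the modulus great circle segment `⟨e_r ↻ a⟩` is contained in `τ⁻¹(C_k^q)`. -/
theorem mgcs_subset_preimage_Ck (n : ℕ) (hn : 1 ≤ n)
    (q a : EuclideanSpace ℂ (Fin n)) (hq : q ∈ Sph n) (ha : a ∈ Sph n)
    (hqint : tau n q ∈ intrinsicInterior ℝ (Splx n))
    (k r : Fin n) (hrk : r ≠ k) (hτa : tau n a ∈ Ck n q k) :
    mgcs n r a ⊆ tau n ⁻¹' Ck n q k := by
  classical
  intro c hc
  obtain ⟨hcs, s, hs0, hs1, hcj, hcr⟩ := hc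
  -- positivity of the coordinates of tau n q
  have hsplx : Splx n
      = convexHull ℝ (Set.range fun i : Fin n => EuclideanSpace.single i (1:ℝ)) :=
    splx_eq n
  rw [hsplx] at hqint
  obtain ⟨u, hupos, husum, hueq⟩ :=
    (key' hn _ (fun i => (single_mem_splx i).2) singles_affineIndependent _).mp hqint
  have hQpos : ∀ j, 0 < tau n q j := by
    intro j
    rw [hueq, sum_smul_single_apply]
    exact hupos j
  have hQsum : ∑ j, tau n q j = 1 := by
    rw [hueq]
    have : ∀ j : Fin n, (∑ i, u i • EuclideanSpace.single i (1:ℝ)) j = u j :=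
      sum_smul_single_apply u
    simp only [this]
    exact husum
  -- the vertex family of C_k^q
  set v : Fin n → EuclideanSpace ℝ (Fin n) :=
    fun i => if i = k then tau n q else EuclideanSpace.single i 1 with hvdef
  have hset : insert (tau n q)
      ((fun j => EuclideanSpace.single j (1 : ℝ)) '' {j | j ≠ k}) = Set.range v := by
    ext x
    simp only [Set.mem_insert_iff, Set.mem_image, Set.mem_setOf_eq, Set.mem_range]
    constructor
    · rintro (rfl | ⟨j, hj, rfl⟩)
      · exact ⟨k, by simp [hvdef]⟩
      · exact ⟨j, by simp [hvdef, hj]⟩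
    · rintro ⟨i, rfl⟩
      by_cases hi : i = k
      · subst hi; left; simp [hvdef]
      · right; exact ⟨i, hi, by simp [hvdef, hi]⟩
  have hvsum : ∀ i, ∑ j, v i j = 1 := by
    intro i
    by_cases hi : i = k
    · subst hi; simp only [hvdef, if_pos rfl]; exact hQsum
    · simp only [hvdef, if_neg hi]; exact (single_mem_splx i).2
  -- coordinates of a linear combination of the v's
  have happly : ∀ (w : Fin n → ℝ) (j : Fin n),
      (∑ i, w i • v i) j = w k * tau n q j + (if j = k then 0 else w j) := by
    intro w j
    rw [WithLp.ofLp_sum, Finset.sum_apply]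
    have hsummand : ∀ i : Fin n, (w i • v i) j = w i * v i j := fun _ => rfl
    by_cases hj : j = k
    · subst hj
      have : ∀ i : Fin n, (w i • v i) j = if i = j then w i * tau n q j else 0 := by
        intro i
        rw [hsummand]
        by_cases hi : i = j
        · subst hi; rw [if_pos rfl, hvdef]; simp
        · rw [if_neg hi, hvdef]
          simp only [if_neg hi]
          rw [EuclideanSpace.single_apply, if_neg (fun h => hi h.symm)]
          ring
      simp only [this, Finset.sum_ite_eq', Finset.mem_univ, if_true, if_pos rfl]
      ring
    · have : ∀ i : Fin n, (w i • v i) j =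
          (if i = k then w i * tau n q j else 0) + (if i = j then w i else 0) := by
        intro i
        rw [hsummand]
        by_cases hik : i = k
        · have hv : v i j = tau n q j := by simp only [hvdef, if_pos hik]
          have hij : i ≠ j := fun h => hj (by rw [← h]; exact hik)
          rw [hv, if_pos hik, if_neg hij, add_zero]
        · rw [if_neg hik, hvdef]
          simp only [if_neg hik]
          rw [EuclideanSpace.single_apply]
          by_cases hij : i = j
          · subst hij; rw [if_pos rfl, if_pos rfl]; ring
          · rw [if_neg hij, if_neg (fun h => hij h.symm)]; ring
      simp only [this, Finset.sum_add_distrib, Finset.sum_ite_eq', Finset.mem_univ, if_true,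
        if_neg hj]
  -- affine independence of the v's
  have hvind : AffineIndependent ℝ v := by
    rw [affineIndependent_iff]
    intro t w hw0 hsum0 e he
    set W : Fin n → ℝ := fun i => if i ∈ t then w i else 0 with hWdef
    have hWsum : (∑ i, W i • v i) = 0 := by
      have : ∀ i : Fin n, W i • v i = if i ∈ t then w i • v i else 0 := by
        intro i
        have hWapp : W i = if i ∈ t then w i else 0 := rfl
        rw [hWapp]
        split_ifs with h
        · rfl
        · exact zero_smul ℝ _
      rw [Finset.sum_congr rfl (fun i _ => this i)]
      rw [Finset.sum_ite_mem, Finset.univ_inter]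
      exact hsum0
    have hWk : W k = 0 := by
      have h := congrArg (fun x : EuclideanSpace ℝ (Fin n) => x k) hWsum
      simp only at h
      rw [happly W k, if_pos rfl, add_zero] at h
      have := hQpos k
      by_contra hne
      exact hne (by
        rcases mul_eq_zero.mp h with h' | h'
        · exact h'
        · exact absurd h' (ne_of_gt this))
    have hWe : W e = 0 := by
      by_cases hek : e = k
      · rw [hek]; exact hWk
      · have h := congrArg (fun x : EuclideanSpace ℝ (Fin n) => x e) hWsum
        simp only at h
        rw [happly W e, if_neg hek, hWk, zero_mul, zero_add] at h
        exact h
    rw [hWdef] at hWe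
    simpa [he] using hWe
  -- rewrite Ck
  have hCk : Ck n q k = intrinsicInterior ℝ (convexHull ℝ (Set.range v)) := by
    rw [Ck, hset]
  rw [hCk] at hτa
  obtain ⟨w, hwpos, hwsum, hweq⟩ := (key' hn v hvsum hvind _).mp hτa
  have hA : ∀ j, ‖a j‖^2 = w k * tau n q j + (if j = k then 0 else w j) := by
    intro j
    have h := congrArg (fun x : EuclideanSpace ℝ (Fin n) => x j) hweq
    simp only at h
    rw [happly w j] at h
    exact h
  -- the new weights
  set w' : Fin n → ℝ := fun i => if i = r then 1 - s + s * w r else s * w i with hw'def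
  have hw'app : ∀ i, w' i = if i = r then 1 - s + s * w r else s * w i := fun _ => rfl
  have hw'pos : ∀ i, 0 < w' i := by
    intro i
    rw [hw'app]
    split_ifs
    · have := mul_pos hs0 (hwpos r); linarith
    · exact mul_pos hs0 (hwpos i)
  have hw'sum : ∑ i, w' i = 1 := by
    have : ∀ i : Fin n, w' i = s * w i + (if i = r then 1 - s else 0) := by
      intro i
      rw [hw'app]
      split_ifs with h
      · rw [h]; ring
      · ring
    simp only [this, Finset.sum_add_distrib, ← Finset.mul_sum, hwsum,
      Finset.sum_ite_eq', Finset.mem_univ, if_true]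
    ring
  have hw'k : w' k = s * w k := by
    rw [hw'app]; exact if_neg (fun h => hrk h.symm)
  have hw'r : w' r = 1 - s + s * w r := by
    rw [hw'app]; exact if_pos rfl
  have hw'j : ∀ j, j ≠ r → w' j = s * w j := by
    intro j hjr
    rw [hw'app]; exact if_neg hjr
  -- conclude
  show tau n c ∈ Ck n q k
  rw [hCk]
  refine (key' hn v hvsum hvind _).mpr ⟨w', hw'pos, hw'sum, ?_⟩
  ext j
  rw [happly w' j]
  have hsnn : (0:ℝ) ≤ s := le_of_lt hs0
  show ‖c j‖^2 = w' k * tau n q j + (if j = k then 0 else w' j)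
  by_cases hjr : j = r
  · subst hjr
    rw [hcr, Real.sq_sqrt (by nlinarith [sq_nonneg ‖a j‖] : (0:ℝ) ≤ (1 - s) + s * ‖a j‖^2)]
    rw [if_neg hrk, hw'k, hw'r]
    have hAj := hA j
    rw [if_neg hrk] at hAj
    rw [hAj]; ring
  · rw [hcj j hjr, mul_pow, Real.sq_sqrt hsnn]
    by_cases hjk : j = k
    · subst hjk
      rw [if_pos rfl, add_zero, hw'k]
      have hAj := hA j
      rw [if_pos rfl, add_zero] at hAj
      rw [hAj]; ring
    · rw [if_neg hjk, hw'k, hw'j j hjr]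
      have hAj := hA j
      rw [if_neg hjk] at hAj
      rw [hAj]; ring
end
end

section
/- Let q ∈ S_n with τ(q) in the relative interior of Δ_{n-1}. Then the sets C_1^q, …, C_n^q are pairwise disjoint, and the union of their closures covers the simplex: ⋃_{k=1}^n closure(C_k^q) ∩ Δ_{n-1} = Δ_{n-1}. Equivalently, the convex hulls of the sets {e_1, …, e_{k-1}, τ(q), e_{k+1}, …, e_n}, k = 1, …, n, form a triangulation of Δ_{n-1} whose pieces overlap only in their boundaries. -/
open MeasureTheory

noncomputable section

namespace CkAux

variable {n : ℕ}

lemma sum_coord {ι : Type*} (s : Finset ι) (v : ι → EuclideanSpace ℝ (Fin n)) (i : Fin n) :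
    (∑ j ∈ s, v j) i = ∑ j ∈ s, v j i := by
  induction s using Finset.cons_induction with
  | empty => rfl
  | cons a s ha ih => rw [Finset.sum_cons, Finset.sum_cons, ← ih]; rfl

abbrev ee (n : ℕ) (j : Fin n) : EuclideanSpace ℝ (Fin n) := EuclideanSpace.single j 1

lemma ee_apply (j i : Fin n) : ee n j i = if i = j then 1 else 0 :=
  EuclideanSpace.single_apply j 1 i

lemma sum_ee (j : Fin n) : ∑ i, ee n j i = 1 := by
  simp [ee_apply]

/-- The affine hyperplane `{x | ∑ x i = 1}` as an affine subspace. -/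
def Wa (n : ℕ) : AffineSubspace ℝ (EuclideanSpace ℝ (Fin n)) where
  carrier := {x | ∑ i, x i = 1}
  smul_vsub_vadd_mem' := by
    intro c p1 p2 p3 h1 h2 h3
    have hc : ∀ i, (c • (p1 -ᵥ p2) +ᵥ p3) i = c * (p1 i - p2 i) + p3 i := fun i => rfl
    simp only [Set.mem_setOf_eq] at h1 h2 h3 ⊢
    simp only [hc]
    rw [Finset.sum_add_distrib, ← Finset.mul_sum, Finset.sum_sub_distrib, h1, h2, h3]
    ring

lemma mem_Wa {x : EuclideanSpace ℝ (Fin n)} : x ∈ Wa n ↔ ∑ i, x i = 1 := Iff.rfl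

variable (p : EuclideanSpace ℝ (Fin n)) (k : Fin n)

def Hk : Set (EuclideanSpace ℝ (Fin n)) :=
  {x | ∑ i, x i = 1 ∧ 0 ≤ x k ∧ ∀ j, x k * p j ≤ x j * p k}

def Uk : Set (EuclideanSpace ℝ (Fin n)) :=
  {x | ∑ i, x i = 1 ∧ 0 < x k ∧ ∀ j, j ≠ k → x k * p j < x j * p k}

variable {p k}

lemma Hk_subset_Wa : Hk p k ⊆ (Wa n : Set _) := fun _ hx => hx.1

lemma span_Hk_le : affineSpan ℝ (Hk p k) ≤ Wa n := affineSpan_le.mpr Hk_subset_Wa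

section
variable (hp0 : ∀ i, 0 < p i) (hp1 : ∑ i, p i = 1)
include hp0 hp1

lemma p_mem_Hk : p ∈ Hk p k :=
  ⟨hp1, (hp0 k).le, fun j => by rw [mul_comm]⟩

omit hp1 in
lemma ee_mem_Hk {j : Fin n} (hj : j ≠ k) : ee n j ∈ Hk p k := by
  refine ⟨sum_ee j, ?_, fun j' => ?_⟩
  · rw [ee_apply]
    simp [hj.symm]
  · rw [ee_apply, ee_apply]
    have h1 : (if k = j then (1:ℝ) else 0) = 0 := by simp [hj.symm]
    rw [h1, zero_mul]
    have : (0:ℝ) ≤ if j' = j then 1 else 0 := by positivity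
    exact mul_nonneg this (hp0 k).le

omit hp0 hp1 in
lemma convex_Hk : Convex ℝ (Hk p k) := by
  intro x hx y hy a b ha hb hab
  obtain ⟨hx1, hx2, hx3⟩ := hx
  obtain ⟨hy1, hy2, hy3⟩ := hy
  have hc : ∀ i, (a • x + b • y) i = a * x i + b * y i := fun _ => rfl
  refine ⟨?_, ?_, fun j => ?_⟩
  · simp only [hc]
    rw [Finset.sum_add_distrib, ← Finset.mul_sum, ← Finset.mul_sum, hx1, hy1]
    linarith
  · rw [hc]
    exact add_nonneg (mul_nonneg ha hx2) (mul_nonneg hb hy2)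
  · rw [hc, hc]
    nlinarith [hx3 j, hy3 j]

lemma hull_eq :
    convexHull ℝ (insert p ((fun j => EuclideanSpace.single j (1 : ℝ)) '' {j | j ≠ k}))
      = Hk p k := by
  apply le_antisymm
  · apply convexHull_min _ convex_Hk
    rintro x (rfl | ⟨j, hj, rfl⟩)
    · exact p_mem_Hk hp0 hp1
    · exact ee_mem_Hk hp0 hj
  · intro x hx
    obtain ⟨h1, h2, h3⟩ := hx
    set c : ℝ := x k / p k with hcdef
    set w : Fin n → ℝ := fun j => if j = k then c else x j - c * p j with hwdef
    set f : Fin n → EuclideanSpace ℝ (Fin n) :=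
      fun j => if j = k then p else ee n j with hfdef
    have hck : c * p k = x k := div_mul_cancel₀ _ (hp0 k).ne'
    have hw0 : ∀ j ∈ Finset.univ, 0 ≤ w j := by
      intro j _
      by_cases hj : j = k
      · simp only [hwdef, hj, if_pos rfl]
        exact div_nonneg h2 (hp0 k).le
      · simp only [hwdef, if_neg hj]
        rw [sub_nonneg, hcdef, div_mul_eq_mul_div, div_le_iff₀ (hp0 k)]
        exact h3 j
    have hw1 : ∑ j, w j = 1 := by
      rw [← Finset.add_sum_erase _ _ (Finset.mem_univ k)]
      have he1 : ∑ j ∈ Finset.univ.erase k, w j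
          = (∑ j ∈ Finset.univ.erase k, x j) - c * ∑ j ∈ Finset.univ.erase k, p j := by
        rw [Finset.mul_sum, ← Finset.sum_sub_distrib]
        refine Finset.sum_congr rfl fun j hj => ?_
        simp [hwdef, (Finset.mem_erase.mp hj).1]
      have hxe : ∑ j ∈ Finset.univ.erase k, x j = 1 - x k := by
        rw [Finset.sum_erase_eq_sub (Finset.mem_univ k), h1]
      have hpe : ∑ j ∈ Finset.univ.erase k, p j = 1 - p k := by
        rw [Finset.sum_erase_eq_sub (Finset.mem_univ k), hp1]
      have hwk : w k = c := by simp [hwdef]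
      rw [he1, hxe, hpe, hwk]
      nlinarith [hck]
    have hsum : ∑ j, w j • f j = x := by
      ext i
      rw [sum_coord]
      have hterm : ∀ j, (w j • f j) i = w j * f j i := fun _ => rfl
      simp only [hterm]
      rw [← Finset.add_sum_erase _ _ (Finset.mem_univ k)]
      have hfk : f k i = p i := by simp [hfdef]
      have hwk : w k = c := by simp [hwdef]
      by_cases hik : i = k
      · have hz : ∑ j ∈ Finset.univ.erase k, w j * f j i = 0 := by
          refine Finset.sum_eq_zero fun j hj => ?_
          have hjk := (Finset.mem_erase.mp hj).1
          have : f j i = 0 := by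
            simp only [hfdef, if_neg hjk]
            rw [ee_apply, if_neg (by rw [hik]; exact Ne.symm hjk)]
          rw [this, mul_zero]
        rw [hz, add_zero, hfk, hwk, hik, hck]
      · have hz : ∑ j ∈ Finset.univ.erase k, w j * f j i = w i := by
          rw [Finset.sum_eq_single i]
          · simp only [hfdef, if_neg hik]
            rw [ee_apply, if_pos rfl, mul_one]
          · intro j hj hji
            have hjk := (Finset.mem_erase.mp hj).1
            have : f j i = 0 := by
              simp only [hfdef, if_neg hjk]
              rw [ee_apply, if_neg (Ne.symm hji)]
            rw [this, mul_zero]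
          · intro h
            exact absurd (Finset.mem_erase.mpr ⟨hik, Finset.mem_univ i⟩) h
        rw [hz, hfk, hwk]
        simp only [hwdef, if_neg hik]
        ring
    have hmem := Finset.centerMass_mem_convexHull (Finset.univ) hw0
      (by rw [hw1]; norm_num)
      (fun j _ => ?_ :
        ∀ j ∈ Finset.univ, f j ∈
          insert p ((fun j => EuclideanSpace.single j (1 : ℝ)) '' {j | j ≠ k}))
    · rw [Finset.centerMass_eq_of_sum_1 _ _ hw1, hsum] at hmem
      exact hmem
    · by_cases hj : j = k
      · simp [hfdef, hj]
      · right
        exact ⟨j, hj, by simp [hfdef, hj]⟩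

end

lemma isOpen_Ok :
    IsOpen {x : EuclideanSpace ℝ (Fin n) | 0 < x k ∧ ∀ j, j ≠ k → x k * p j < x j * p k} := by
  have hc : ∀ i : Fin n, Continuous fun x : EuclideanSpace ℝ (Fin n) => x i :=
    fun i => (EuclideanSpace.proj i).continuous
  have heq : {x : EuclideanSpace ℝ (Fin n) | 0 < x k ∧ ∀ j, j ≠ k → x k * p j < x j * p k}
      = {x | 0 < x k} ∩ ⋂ j : Fin n, {x | j ≠ k → x k * p j < x j * p k} := by
    ext x; simp [Set.mem_iInter]
  rw [heq]
  refine (isOpen_lt continuous_const (hc k)).inter (isOpen_iInter_of_finite fun j => ?_)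
  by_cases hj : j = k
  · have : {x : EuclideanSpace ℝ (Fin n) | j ≠ k → x k * p j < x j * p k} = Set.univ := by
      ext x; simp [hj]
    rw [this]; exact isOpen_univ
  · have : {x : EuclideanSpace ℝ (Fin n) | j ≠ k → x k * p j < x j * p k}
        = {x | x k * p j < x j * p k} := by
      ext x; simp [hj]
    rw [this]
    exact isOpen_lt ((hc k).mul continuous_const) ((hc j).mul continuous_const)

lemma mem_intrinsicInterior_of_isOpen {s U : Set (EuclideanSpace ℝ (Fin n))}
    {x : EuclideanSpace ℝ (Fin n)} (hU : IsOpen U) (hxU : x ∈ U) (hxs : x ∈ s)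
    (hsub : ∀ z ∈ U, z ∈ affineSpan ℝ s → z ∈ s) :
    x ∈ intrinsicInterior ℝ s := by
  rw [mem_intrinsicInterior]
  refine ⟨⟨x, subset_affineSpan ℝ s hxs⟩, ?_, rfl⟩
  refine interior_maximal ?_ (hU.preimage continuous_subtype_val) hxU
  rintro ⟨z, hzspan⟩ hz
  exact hsub z hz hzspan

lemma exists_perturb {s : Set (EuclideanSpace ℝ (Fin n))} {x d : EuclideanSpace ℝ (Fin n)}
    (hx : x ∈ intrinsicInterior ℝ s) (hd : d ∈ (affineSpan ℝ s).direction) :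
    ∃ δ : ℝ, 0 < δ ∧ x + δ • d ∈ s := by
  rw [mem_intrinsicInterior] at hx
  obtain ⟨y, hy, rfl⟩ := hx
  rw [mem_interior_iff_mem_nhds, Metric.mem_nhds_iff] at hy
  obtain ⟨ε, hε, hball⟩ := hy
  set δ : ℝ := ε / (2 * (‖d‖ + 1)) with hδdef
  have hd1 : (0:ℝ) < ‖d‖ + 1 := by positivity
  have hδ0 : 0 < δ := by positivity
  refine ⟨δ, hδ0, ?_⟩
  have hmem : (y : EuclideanSpace ℝ (Fin n)) + δ • d ∈ affineSpan ℝ s := by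
    have := AffineSubspace.vadd_mem_of_mem_direction
      (Submodule.smul_mem _ δ hd) y.2
    rwa [vadd_eq_add, add_comm] at this
  have hdist : (⟨(y : EuclideanSpace ℝ (Fin n)) + δ • d, hmem⟩ : affineSpan ℝ s)
      ∈ Metric.ball y ε := by
    rw [Metric.mem_ball, Subtype.dist_eq, dist_eq_norm]
    have h1 : (y : EuclideanSpace ℝ (Fin n)) + δ • d - y = δ • d := add_sub_cancel_left _ _
    rw [h1, norm_smul, Real.norm_eq_abs, abs_of_pos hδ0]
    have h2 : δ * (‖d‖ + 1) = ε / 2 := by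
      rw [hδdef]; field_simp
    nlinarith [norm_nonneg d]
  exact hball hdist

section
variable (hp0 : ∀ i, 0 < p i) (hp1 : ∑ i, p i = 1)
include hp0 hp1

lemma Uk_subset : Uk p k ⊆ intrinsicInterior ℝ (Hk p k) := by
  intro x hx
  obtain ⟨h1, h2, h3⟩ := hx
  refine mem_intrinsicInterior_of_isOpen (isOpen_Ok (p := p) (k := k)) ⟨h2, h3⟩ ?_ ?_
  · refine ⟨h1, h2.le, fun j => ?_⟩
    by_cases hj : j = k
    · subst hj; rw [mul_comm]
    · exact (h3 j hj).le
  · intro z hz hzspan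
    have hz1 : ∑ i, z i = 1 := span_Hk_le hzspan
    refine ⟨hz1, hz.1.le, fun j => ?_⟩
    by_cases hj : j = k
    · subst hj; rw [mul_comm]
    · exact (hz.2 j hj).le

lemma intrinsic_subset_Uk : intrinsicInterior ℝ (Hk p k) ⊆ Uk p k := by
  intro x hx
  have hxH : x ∈ Hk p k := intrinsicInterior_subset hx
  obtain ⟨h1, h2, h3⟩ := hxH
  have hspan_p : p ∈ affineSpan ℝ (Hk p k) :=
    subset_affineSpan _ _ (p_mem_Hk hp0 hp1)
  refine ⟨h1, ?_, ?_⟩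
  · rcases h2.lt_or_eq with h | h
    · exact h
    exfalso
    obtain ⟨j, -, hj⟩ := Finset.exists_ne_zero_of_sum_ne_zero
      (by rw [h1]; norm_num : ∑ i, x i ≠ 0)
    have hjk : j ≠ k := by rintro rfl; exact hj h.symm
    have hd : ee n j - p ∈ (affineSpan ℝ (Hk p k)).direction := by
      have := AffineSubspace.vsub_mem_direction
        (subset_affineSpan ℝ _ (ee_mem_Hk hp0 hjk)) hspan_p
      rwa [vsub_eq_sub] at this
    obtain ⟨δ, hδ, hmem⟩ := exists_perturb hx hd
    have hco : (x + δ • (ee n j - p)) k = x k + δ * (ee n j k - p k) := rfl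
    have h0 := hmem.2.1
    rw [hco, ee_apply, if_neg (Ne.symm hjk)] at h0
    rw [← h] at h0
    nlinarith [hp0 k]
  · intro j hjk
    by_contra hcon
    push_neg at hcon
    have heq : x k * p j = x j * p k := le_antisymm (h3 j) hcon
    have hd : p - ee n j ∈ (affineSpan ℝ (Hk p k)).direction := by
      have := AffineSubspace.vsub_mem_direction hspan_p
        (subset_affineSpan ℝ _ (ee_mem_Hk hp0 hjk))
      rwa [vsub_eq_sub] at this
    obtain ⟨δ, hδ, hmem⟩ := exists_perturb hx hd
    have hineq := hmem.2.2 j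
    have hcok : (x + δ • (p - ee n j)) k = x k + δ * (p k - ee n j k) := rfl
    have hcoj : (x + δ • (p - ee n j)) j = x j + δ * (p j - ee n j j) := rfl
    rw [hcok, hcoj, ee_apply, ee_apply, if_neg (Ne.symm hjk), if_pos rfl] at hineq
    nlinarith [hp0 k]

lemma Hk_subset_closure_Uk : Hk p k ⊆ closure (Uk p k) := by
  intro x hx
  obtain ⟨h1, h2, h3⟩ := hx
  by_cases hall : ∀ m : Fin n, m = k
  · apply subset_closure
    refine ⟨h1, ?_, fun j hj => absurd (hall j) hj⟩
    have hs : ∑ i, x i = x k :=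
      Finset.sum_eq_single_of_mem k (Finset.mem_univ k)
        (fun b _ hb => absurd (hall b) hb)
    rw [hs] at h1; rw [h1]; norm_num
  · push_neg at hall
    obtain ⟨m, hm⟩ := hall
    have hpk1 : p k < 1 := by
      have hpair : p k + p m = ∑ i ∈ ({k, m} : Finset (Fin n)), p i :=
        (Finset.sum_pair (Ne.symm hm)).symm
      have hle : ∑ i ∈ ({k, m} : Finset (Fin n)), p i ≤ ∑ i, p i :=
        Finset.sum_le_sum_of_subset_of_nonneg (Finset.subset_univ _)
          (fun i _ _ => (hp0 i).le)
      have := hp0 m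
      rw [hp1] at hle
      linarith [hpair ▸ hle]
    have hne : (1:ℝ) - p k ≠ 0 := by linarith
    set c : EuclideanSpace ℝ (Fin n) :=
      (WithLp.equiv 2 (Fin n → ℝ)).symm
        (fun i => if i = k then p k / 2 else p i / 2 * (1 + 1 / (1 - p k))) with hcdef
    have hcapp : ∀ i, c i = if i = k then p k / 2 else p i / 2 * (1 + 1 / (1 - p k)) :=
      fun _ => rfl
    have hsum_c : ∑ i, c i = 1 := by
      simp only [hcapp]
      rw [← Finset.add_sum_erase _ _ (Finset.mem_univ k), if_pos rfl]
      have he : ∑ j ∈ Finset.univ.erase k,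
          (if j = k then p k / 2 else p j / 2 * (1 + 1 / (1 - p k)))
          = (∑ j ∈ Finset.univ.erase k, p j) / 2 * (1 + 1 / (1 - p k)) := by
        rw [Finset.sum_div, Finset.sum_mul]
        refine Finset.sum_congr rfl fun j hj => ?_
        rw [if_neg (Finset.mem_erase.mp hj).1]
      rw [he, Finset.sum_erase_eq_sub (Finset.mem_univ k), hp1]
      field_simp
      ring
    have hck : 0 < c k := by rw [hcapp, if_pos rfl]; linarith [hp0 k]
    have hcstrict : ∀ j, j ≠ k → c k * p j < c j * p k := by
      intro j hj
      rw [hcapp, hcapp, if_pos rfl, if_neg hj]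
      have hinv : 0 < 1 / (1 - p k) := one_div_pos.mpr (by linarith)
      have hkey : p j / 2 * (1 + 1 / (1 - p k)) * p k - p k / 2 * p j
          = p j * p k * (1 / (1 - p k)) / 2 := by ring
      have hpos : 0 < p j * p k * (1 / (1 - p k)) :=
        mul_pos (mul_pos (hp0 j) (hp0 k)) hinv
      linarith
    have hcU : c ∈ Uk p k := ⟨hsum_c, hck, hcstrict⟩
    rw [Metric.mem_closure_iff]
    intro ε hε
    set t : ℝ := min 1 (ε / (2 * (‖c - x‖ + 1))) with htdef
    have hn1 : (0:ℝ) < ‖c - x‖ + 1 := by positivity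
    have ht0 : 0 < t := lt_min one_pos (by positivity)
    have ht1 : t ≤ 1 := min_le_left _ _
    refine ⟨x + t • (c - x), ⟨?_, ?_, ?_⟩, ?_⟩
    · have hco : ∀ i, (x + t • (c - x)) i = x i + t * (c i - x i) := fun _ => rfl
      simp only [hco]
      rw [Finset.sum_add_distrib, ← Finset.mul_sum, Finset.sum_sub_distrib, h1, hsum_c]
      ring
    · have hco : (x + t • (c - x)) k = x k + t * (c k - x k) := rfl
      rw [hco]; nlinarith
    · intro j hj
      have hcok : (x + t • (c - x)) k = x k + t * (c k - x k) := rfl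
      have hcoj : (x + t • (c - x)) j = x j + t * (c j - x j) := rfl
      rw [hcok, hcoj]
      have hxj := h3 j
      have hcj := hcstrict j hj
      nlinarith
    · rw [dist_eq_norm]
      have hco : x - (x + t • (c - x)) = -(t • (c - x)) := by abel
      rw [hco, norm_neg, norm_smul, Real.norm_eq_abs, abs_of_pos ht0]
      have h2' : t ≤ ε / (2 * (‖c - x‖ + 1)) := min_le_right _ _
      have h3' : ε / (2 * (‖c - x‖ + 1)) * (2 * (‖c - x‖ + 1)) = ε := by field_simp
      nlinarith [norm_nonneg (c - x),
        mul_le_mul_of_nonneg_right h2' (norm_nonneg (c - x))]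

end

lemma ee_mem_Splx (i : Fin n) : ee n i ∈ Splx n := by
  refine ⟨fun j => ?_, sum_ee i⟩
  rw [ee_apply]
  positivity

lemma Splx_subset_Wa : Splx n ⊆ (Wa n : Set _) := fun _ hx => hx.2

lemma pos_of_mem_intrinsicInterior_Splx {p : EuclideanSpace ℝ (Fin n)}
    (hp : p ∈ intrinsicInterior ℝ (Splx n)) (i : Fin n) : 0 < p i := by
  have hpS : p ∈ Splx n := intrinsicInterior_subset hp
  rcases (hpS.1 i).lt_or_eq with h | h
  · exact h
  exfalso
  have hd : p - ee n i ∈ (affineSpan ℝ (Splx n)).direction := by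
    have := AffineSubspace.vsub_mem_direction
      (subset_affineSpan ℝ _ hpS) (subset_affineSpan ℝ _ (ee_mem_Splx i))
    rwa [vsub_eq_sub] at this
  obtain ⟨δ, hδ, hmem⟩ := exists_perturb hp hd
  have h0 := hmem.1 i
  have hco : (p + δ • (p - ee n i)) i = p i + δ * (p i - ee n i i) := rfl
  rw [hco, ee_apply, if_pos rfl, ← h] at h0
  linarith

end CkAux

/-- If `τ(q)` is in the relative interior of `Δ_{n-1}`, the sets `C_1^q, …, C_n^q` are
pairwise disjoint and the union of their closures covers `Δ_{n-1}`. -/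
theorem Ck_triangulation (n : ℕ) (hn : 1 ≤ n)
    (q : EuclideanSpace ℂ (Fin n)) (hq : q ∈ Sph n)
    (hqint : tau n q ∈ intrinsicInterior ℝ (Splx n)) :
    (Pairwise fun k l => Disjoint (Ck n q k) (Ck n q l)) ∧
    (⋃ k, closure (Ck n q k)) ∩ Splx n = Splx n := by
  classical
  set p := tau n q with hpdef
  have hp0 : ∀ i, 0 < p i := CkAux.pos_of_mem_intrinsicInterior_Splx hqint
  have hpS : p ∈ Splx n := intrinsicInterior_subset hqint
  have hp1 : ∑ i, p i = 1 := hpS.2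
  have hCk : ∀ k, Ck n q k = intrinsicInterior ℝ (CkAux.Hk p k) := by
    intro k
    unfold Ck
    rw [CkAux.hull_eq hp0 hp1]
  constructor
  · intro k l hkl
    rw [Set.disjoint_left]
    intro x hxk hxl
    have h1 := CkAux.intrinsic_subset_Uk hp0 hp1 ((hCk k) ▸ hxk)
    have h2 := CkAux.intrinsic_subset_Uk hp0 hp1 ((hCk l) ▸ hxl)
    have ha := h1.2.2 l (Ne.symm hkl)
    have hb := h2.2.2 k hkl
    linarith
  · rw [Set.inter_eq_right]
    intro x hx
    have hne : Nonempty (Fin n) := ⟨⟨0, hn⟩⟩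
    obtain ⟨k, -, hk⟩ := Finset.exists_min_image Finset.univ
      (fun j => x j / p j) Finset.univ_nonempty
    have hxH : x ∈ CkAux.Hk p k := by
      refine ⟨hx.2, hx.1 k, fun j => ?_⟩
      have := hk j (Finset.mem_univ j)
      rwa [div_le_div_iff₀ (hp0 k) (hp0 j)] at this
    refine Set.mem_iUnion.mpr ⟨k, ?_⟩
    rw [hCk k]
    exact closure_mono (CkAux.Uk_subset hp0 hp1)
      (CkAux.Hk_subset_closure_Uk hp0 hp1 hxH)
end
end
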